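/- An (ε,δ)-approximate p-variable for P is also a (0, δ')-approximate p-variable for P, where δ'_P = (ε_P + δ_P)/(1 + ε_P). That is, if P(P ≤ t) ≤ (1+ε_P)t + δ_P for all t ∈ (0,1), then P(P ≤ t) ≤ t + δ'_P for all t ∈ (0,1). -/

import Mathlib

open MeasureTheory
open scoped ENNReal

/-- An `(ε,δ)`-approximate p-variable is also a `(0, δ')`-approximate p-variable with
`δ' = (ε + δ)/(1 + ε)`. -/
theorem approx_p_eps_to_delta {Ω : Type*} [MeasurableSpace Ω]
    (Unv : Set (Measure Ω)) (hprob : ∀ P ∈ Unv, IsProbabilityMeasure P)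
    (ε δ : Measure Ω → ℝ)
    (hε : ∀ P ∈ Unv, 0 ≤ ε P) (hδ : ∀ P ∈ Unv, 0 ≤ δ P ∧ δ P ≤ 1)
    (X : Ω → ℝ)
    (happrox : ∀ P ∈ Unv, ∀ t : ℝ, 0 < t → t < 1 →
      P {ω | X ω ≤ t} ≤ ENNReal.ofReal ((1 + ε P) * t + δ P)) :
    ∀ P ∈ Unv, ∀ t : ℝ, 0 < t → t < 1 →
      P {ω | X ω ≤ t} ≤ ENNReal.ofReal (t + (ε P + δ P) / (1 + ε P)) := by
  intro P hP t ht0 ht1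
  have hεP := hε P hP
  obtain ⟨hδ0, hδ1⟩ := hδ P hP
  have hpos : (0:ℝ) < 1 + ε P := by linarith
  by_cases hcase : t ≤ (1 - δ P) / (1 + ε P)
  · refine le_trans (happrox P hP t ht0 ht1) (ENNReal.ofReal_le_ofReal ?_)
    have h1 : t * (1 + ε P) ≤ 1 - δ P := (le_div_iff₀ hpos).mp hcase
    have key : ε P * t ≤ (ε P + δ P) / (1 + ε P) - δ P := by
      rw [le_sub_iff_add_le, le_div_iff₀ hpos]
      nlinarith
    nlinarith
  · have := hprob P hP
    have h1 : (1:ℝ) ≤ t + (ε P + δ P) / (1 + ε P) := by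
      push_neg at hcase
      have : (1 - δ P) / (1 + ε P) + (ε P + δ P) / (1 + ε P) = 1 := by
        field_simp
        ring
      nlinarith
    calc P {ω | X ω ≤ t} ≤ 1 := prob_le_one
      _ ≤ ENNReal.ofReal (t + (ε P + δ P) / (1 + ε P)) := by
          rw [show (1:ℝ≥0∞) = ENNReal.ofReal 1 by simp]
          exact ENNReal.ofReal_le_ofReal h1
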